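/- For every integer M ≥ 3 there exist pairwise distinct positive real numbers z_1,…,z_M such that for every real polynomial f of degree at most 5 in one variable, (1/(2M+1)) · ( f(0) + ∑_{i=1}^M ( f(z_i) + f(−z_i) ) ) = π^{−1/2} ∫_ℝ f(ω) e^{−ω²} dω. In other words, the 2M+1 points {0, ±z_1, …, ±z_M} with equal weights 1/(2M+1) form an equi-weighted one-dimensional Gaussian 5-design. -/

import Mathlib

open Real MeasureTheory Finset

lemma aux_integrable (n : ℕ) :
    Integrable (fun x : ℝ => x ^ n * Real.exp (-x ^ 2)) := by
  have h2 : (0:ℝ) < (1:ℝ)/2 := by norm_num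
  apply Integrable.mono' ((integrable_exp_neg_mul_sq h2).const_mul ((2:ℝ)^n * n.factorial + 1))
  · exact (Continuous.mul (continuous_pow n) (by fun_prop)).aestronglyMeasurable
  · filter_upwards with x
    have hx2 : (0:ℝ) ≤ x ^ 2 / 2 := by positivity
    have hfac : (0:ℝ) < n.factorial := by exact_mod_cast n.factorial_pos
    have key : |x| ^ n * Real.exp (-(x^2/2)) ≤ (2:ℝ)^n * n.factorial + 1 := by
      have hexp : Real.exp (-(x^2/2)) ≤ 1 := Real.exp_le_one_iff.2 (by linarith)
      rcases le_total (|x|) 1 with h | h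
      · have h1 : |x| ^ n ≤ 1 := pow_le_one₀ (abs_nonneg x) h
        nlinarith [Real.exp_pos (-(x^2/2)), pow_pos (show (0:ℝ) < 2 by norm_num) n]
      · have h1 : |x| ^ n ≤ (x^2) ^ n := by
          apply pow_le_pow_left₀ (abs_nonneg x)
          nlinarith [sq_abs x]
        have h3 : (x^2/2)^n / n.factorial ≤ Real.exp (x^2/2) :=
          Real.pow_div_factorial_le_exp _ hx2 n
        have h4 : (x^2)^n ≤ 2^n * n.factorial * Real.exp (x^2/2) := by
          have : (x^2)^n = 2^n * (x^2/2)^n := by rw [← mul_pow]; ring_nf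
          rw [this]
          have := mul_le_mul_of_nonneg_left h3 (by positivity : (0:ℝ) ≤ 2^n * n.factorial)
          calc (2:ℝ)^n * (x^2/2)^n = 2^n * n.factorial * ((x^2/2)^n / n.factorial) := by
                field_simp
            _ ≤ 2^n * n.factorial * Real.exp (x^2/2) := by
                apply mul_le_mul_of_nonneg_left h3 (by positivity)
        have h5 : |x|^n * Real.exp (-(x^2/2)) ≤ 2^n * n.factorial := by
          calc |x|^n * Real.exp (-(x^2/2)) ≤ (2^n * n.factorial * Real.exp (x^2/2)) * Real.exp (-(x^2/2)) :=
              mul_le_mul_of_nonneg_right (h1.trans h4) (Real.exp_pos _).le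
            _ = 2^n * n.factorial := by rw [mul_assoc, ← Real.exp_add]; simp
        linarith
    have hsplit : Real.exp (-x^2) = Real.exp (-(x^2/2)) * Real.exp (-(1/2) * x^2) := by
      rw [← Real.exp_add]; ring_nf
    rw [Real.norm_eq_abs, abs_mul, abs_pow, Real.abs_exp, hsplit, ← mul_assoc]
    exact mul_le_mul_of_nonneg_right key (Real.exp_pos _).le

lemma aux_exp_deriv (x : ℝ) :
    HasDerivAt (fun x : ℝ => Real.exp (-x ^ 2)) (Real.exp (-x ^ 2) * (-(2 * x))) x := by
  have h1 : HasDerivAt (fun x : ℝ => -x ^ 2) (-(2 * x)) x := by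
    simpa using (hasDerivAt_pow 2 x).fun_neg
  exact (Real.hasDerivAt_exp _).comp x h1

lemma aux_deriv (n : ℕ) (x : ℝ) :
    HasDerivAt (fun x : ℝ => x ^ (n+1) * Real.exp (-x ^ 2))
      (((n:ℝ)+1) * (x ^ n * Real.exp (-x ^ 2)) - 2 * (x ^ (n+2) * Real.exp (-x ^ 2))) x := by
  have := (hasDerivAt_pow (n+1) x).fun_mul (aux_exp_deriv x)
  convert this using 1
  · rfl
  · rfl
  push_cast
  ring

lemma aux_rec (n : ℕ) :
    2 * ∫ x : ℝ, x ^ (n+2) * Real.exp (-x ^ 2)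
      = ((n:ℝ)+1) * ∫ x : ℝ, x ^ n * Real.exp (-x ^ 2) := by
  have hint : Integrable (fun x : ℝ =>
      ((n:ℝ)+1) * (x ^ n * Real.exp (-x ^ 2)) - 2 * (x ^ (n+2) * Real.exp (-x ^ 2))) :=
    ((aux_integrable n).const_mul _).sub ((aux_integrable (n+2)).const_mul 2)
  have h := integral_eq_zero_of_hasDerivAt_of_integrable (aux_deriv n) hint (aux_integrable (n+1))
  rw [integral_sub ((aux_integrable n).const_mul _) ((aux_integrable (n+2)).const_mul 2),
    MeasureTheory.integral_const_mul, MeasureTheory.integral_const_mul] at h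
  linarith

lemma aux_I0 : ∫ x : ℝ, x ^ 0 * Real.exp (-x ^ 2) = Real.sqrt π := by
  simpa using integral_gaussian 1

lemma aux_I1 : ∫ x : ℝ, x ^ 1 * Real.exp (-x ^ 2) = 0 := by
  have hd : ∀ x : ℝ, HasDerivAt (fun x : ℝ => -Real.exp (-x ^ 2) / 2)
      (x ^ 1 * Real.exp (-x ^ 2)) x := by
    intro x
    have := ((aux_exp_deriv x).fun_neg).div_const 2
    convert this using 1
    · rfl
    · rfl
    ring
  exact integral_eq_zero_of_hasDerivAt_of_integrable hd (aux_integrable 1)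
    (((integrable_exp_neg_mul_sq one_pos).neg.div_const 2).congr
      (by filter_upwards with x; simp [neg_mul]))

lemma aux_I2 : ∫ x : ℝ, x ^ 2 * Real.exp (-x ^ 2) = Real.sqrt π / 2 := by
  have := aux_rec 0
  rw [aux_I0] at this
  norm_num at this
  linarith

lemma aux_I3 : ∫ x : ℝ, x ^ 3 * Real.exp (-x ^ 2) = 0 := by
  have := aux_rec 1
  rw [aux_I1] at this
  norm_num at this
  linarith

lemma aux_I4 : ∫ x : ℝ, x ^ 4 * Real.exp (-x ^ 2) = 3 * Real.sqrt π / 4 := by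
  have := aux_rec 2
  rw [aux_I2] at this
  norm_num at this
  linarith

lemma aux_I5 : ∫ x : ℝ, x ^ 5 * Real.exp (-x ^ 2) = 0 := by
  have := aux_rec 3
  rw [aux_I3] at this
  norm_num at this
  exact this

lemma aux_sum1 (m : ℕ) : ∑ i ∈ range m, ((i:ℝ)+1) = (m:ℝ)*((m:ℝ)+1)/2 := by
  induction m with
  | zero => simp
  | succ k ih => rw [Finset.sum_range_succ, ih]; push_cast; ring

lemma aux_sum2 (m : ℕ) : ∑ i ∈ range m, ((i:ℝ)+1)^2 = (m:ℝ)*((m:ℝ)+1)*(2*(m:ℝ)+1)/6 := by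
  induction m with
  | zero => simp
  | succ k ih => rw [Finset.sum_range_succ, ih]; push_cast; ring

set_option maxHeartbeats 1000000 in
lemma aux_nodes (m : ℕ) (hm : 2 ≤ m) :
    ∃ a : Fin (m+1) → ℝ, Function.Injective a ∧ (∀ i, 0 < a i) ∧
      (∑ i, a i = (2*(m:ℝ)+3)/4) ∧ (∑ i, (a i)^2 = 3*(2*(m:ℝ)+3)/8) := by
  set μ := (m:ℝ) with hμdef
  have hμ : (2:ℝ) ≤ μ := by rw [hμdef]; exact_mod_cast hm
  set S : ℝ := (2*μ+3)/4 with hS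
  set T : ℝ := μ*(μ+1)/2 with hT
  set B : ℝ := μ*(μ+1)*(2*μ+1)/6 with hB
  set Q : ℝ := 3*(2*μ+3)/8 with hQ
  have hTμ : 0 < T + μ := by nlinarith
  set ε₁ : ℝ := S / (T + μ) with hε₁
  have hε₁pos : 0 < ε₁ := by
    apply div_pos (by nlinarith) hTμ
  set g : ℝ → ℝ := fun ε => ε^2*B + (S - ε*T)^2 with hg
  have hcont : ContinuousOn g (Set.Icc 0 ε₁) := by fun_prop
  have hg0 : Q < g 0 := by simp only [hg]; nlinarith
  have hμ0 : (0:ℝ) < μ := by linarith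
  have key : S^2*(B+μ^2) < Q*(T+μ)^2 := by
    have hfact : Q*(T+μ)^2 - S^2*(B+μ^2) = μ*(2*μ+3)*(5*μ^3+30*μ^2+52*μ-3)/96 := by
      rw [hS, hT, hB, hQ]; ring
    nlinarith [mul_pos (mul_pos hμ0 (show (0:ℝ) < 2*μ+3 by linarith))
      (show (0:ℝ) < 5*μ^3+30*μ^2+52*μ-3 by nlinarith)]
  have hg1 : g ε₁ < Q := by
    have h1 : S - ε₁ * T = ε₁ * μ := by
      rw [hε₁]; field_simp; ring
    have h2 : g ε₁ = S^2*(B+μ^2)/(T+μ)^2 := by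
      simp only [hg, h1, hε₁]
      field_simp
      ring
    rw [h2, div_lt_iff₀ (by positivity)]
    linarith
  have hIvt := intermediate_value_Ioo' (le_of_lt hε₁pos) hcont
  obtain ⟨ε, hεmem, hεval⟩ := hIvt ⟨hg1, hg0⟩
  obtain ⟨hε0, hεlt⟩ := hεmem
  have hkey : ε * (T + μ) < S := by
    rw [hε₁, lt_div_iff₀ hTμ] at hεlt
    linarith
  -- define a
  refine ⟨fun i => if (i:ℕ) < m then ε * ((i:ℕ)+1) else S - ε*T, ?_, ?_, ?_, ?_⟩
  · intro i j hij
    have hvals : ∀ k : Fin (m+1), ¬((k:ℕ) < m) → (k:ℕ) = m := by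
      intro k hk; omega
    by_cases hi : (i:ℕ) < m <;> by_cases hj : (j:ℕ) < m <;>
      simp only [hi, hj, if_true, if_false] at hij
    · have : ((i:ℕ):ℝ) = ((j:ℕ):ℝ) := by
        have := mul_left_cancel₀ (ne_of_gt hε0) hij
        linarith
      exact Fin.ext (by exact_mod_cast this)
    · exfalso
      have hle : ε * ((i:ℕ)+1) ≤ ε * μ := by
        apply mul_le_mul_of_nonneg_left _ hε0.le
        have : ((i:ℕ):ℝ) + 1 ≤ μ := by rw [hμdef]; exact_mod_cast Nat.succ_le_of_lt hi
        linarith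
      nlinarith
    · exfalso
      have hle : ε * ((j:ℕ)+1) ≤ ε * μ := by
        apply mul_le_mul_of_nonneg_left _ hε0.le
        have : ((j:ℕ):ℝ) + 1 ≤ μ := by rw [hμdef]; exact_mod_cast Nat.succ_le_of_lt hj
        linarith
      nlinarith
    · exact Fin.ext (by rw [hvals i hi, hvals j hj])
  · intro i
    by_cases hi : (i:ℕ) < m <;> simp only [hi, if_true, if_false]
    · positivity
    · nlinarith
  · rw [Fin.sum_univ_castSucc]
    simp only [Fin.coe_castSucc, Fin.is_lt, if_true, Fin.val_last, lt_irrefl, if_false]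
    rw [← Finset.mul_sum]
    rw [Fin.sum_univ_eq_sum_range (fun i => ((i:ℝ)+1)) m, aux_sum1]
    rw [hT, hS]
    ring
  · rw [Fin.sum_univ_castSucc]
    simp only [Fin.coe_castSucc, Fin.is_lt, if_true, Fin.val_last, lt_irrefl, if_false]
    have : ∑ i : Fin m, (ε * ((i:ℕ)+1))^2 = ε^2 * ∑ i : Fin m, ((i:ℕ)+1:ℝ)^2 := by
      rw [Finset.mul_sum]; congr 1; ext i; ring
    rw [this, Fin.sum_univ_eq_sum_range (fun i => ((i:ℝ)+1)^2) m, aux_sum2]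
    exact hεval

lemma aux_design (m : ℕ) (z : Fin (m+1) → ℝ)
    (hS : ∑ i, (z i)^2 = (2*(m:ℝ)+3)/4) (hQ : ∑ i, (z i)^4 = 3*(2*(m:ℝ)+3)/8)
    (k : ℕ) (hk : k < 6) :
    (1/(2*(m:ℝ)+3)) * ((0:ℝ)^k + ∑ i, ((z i)^k + (-z i)^k))
      = π ^ (-(1:ℝ)/2) * ∫ x : ℝ, x ^ k * Real.exp (-x ^ 2) := by
  have hπ' : π ^ (-(1:ℝ)/2) = (Real.sqrt π)⁻¹ := by
    rw [Real.sqrt_eq_rpow, ← Real.rpow_neg pi_pos.le]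
    norm_num
  have hsq : Real.sqrt π ≠ 0 := by positivity
  have hm3 : (2*(m:ℝ)+3) ≠ 0 := by positivity
  interval_cases k
  · rw [aux_I0, hπ']
    simp only [pow_zero, Finset.sum_const, card_univ, Fintype.card_fin, nsmul_eq_mul]
    field_simp
    push_cast
    ring
  · rw [aux_I1]
    simp
  · rw [aux_I2, hπ']
    have h1 : ∑ i, ((z i)^2 + (-z i)^2) = 2 * ((2*(m:ℝ)+3)/4) := by
      have : ∀ i, (z i)^2 + (-z i)^2 = 2 * (z i)^2 := fun i => by ring
      simp only [this]
      rw [← Finset.mul_sum, hS]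
    rw [h1]
    field_simp
    ring
  · rw [aux_I3]
    have : ∀ i, (z i)^3 + (-z i)^3 = 0 := fun i => by ring
    simp [this]
  · rw [aux_I4, hπ']
    have h1 : ∑ i, ((z i)^4 + (-z i)^4) = 2 * (3*(2*(m:ℝ)+3)/8) := by
      have : ∀ i, (z i)^4 + (-z i)^4 = 2 * (z i)^4 := fun i => by ring
      simp only [this]
      rw [← Finset.mul_sum, hQ]
    rw [h1]
    field_simp
    ring
  · rw [aux_I5]
    have : ∀ i, (z i)^5 + (-z i)^5 = 0 := fun i => by ring
    simp [this]

theorem stmt10 (M : ℕ) (hM : 3 ≤ M) :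
    ∃ z : Fin M → ℝ, Function.Injective z ∧ (∀ i, 0 < z i) ∧
      ∀ f : Polynomial ℝ, f.natDegree ≤ 5 →
        (1 / (2 * (M : ℝ) + 1)) *
            (f.eval 0 + ∑ i, (f.eval (z i) + f.eval (-z i)))
          = Real.pi ^ (-(1 : ℝ) / 2) * ∫ ω : ℝ, f.eval ω * Real.exp (-ω ^ 2) := by
  obtain ⟨m, rfl⟩ : ∃ m, M = m + 1 := ⟨M - 1, by omega⟩
  have hm : 2 ≤ m := by omega
  obtain ⟨a, ha_inj, ha_pos, haS, haQ⟩ := aux_nodes m hm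
  refine ⟨fun i => Real.sqrt (a i), ?_, ?_, ?_⟩
  · intro i j hij
    apply ha_inj
    have := congrArg (fun t : ℝ => t^2) hij
    simpa [Real.sq_sqrt (ha_pos i).le, Real.sq_sqrt (ha_pos j).le] using this
  · exact fun i => Real.sqrt_pos.2 (ha_pos i)
  intro f hf
  set z : Fin (m+1) → ℝ := fun i => Real.sqrt (a i) with hz
  have hzsq : ∀ i, (z i)^2 = a i := fun i => Real.sq_sqrt (ha_pos i).le
  have hS : ∑ i, (z i)^2 = (2*(m:ℝ)+3)/4 := by simp only [hzsq]; exact haS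
  have hQ : ∑ i, (z i)^4 = 3*(2*(m:ℝ)+3)/8 := by
    have : ∀ i, (z i)^4 = (a i)^2 := fun i => by rw [← hzsq i]; ring
    simp only [this]; exact haQ
  have hN : 2 * ((m:ℝ)+1) + 1 = 2*(m:ℝ)+3 := by ring
  have hMN : (2 : ℝ) * ((m+1 : ℕ) : ℝ) + 1 = 2*(m:ℝ)+3 := by push_cast; ring
  have heval : ∀ x : ℝ, f.eval x = ∑ k ∈ range 6, f.coeff k * x ^ k := fun x =>
    f.eval_eq_sum_range' (lt_of_le_of_lt hf (by norm_num)) x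
  -- RHS
  have hRHS : ∫ ω : ℝ, f.eval ω * Real.exp (-ω ^ 2)
      = ∑ k ∈ range 6, f.coeff k * ∫ x : ℝ, x ^ k * Real.exp (-x ^ 2) := by
    have h1 : ∀ ω : ℝ, f.eval ω * Real.exp (-ω ^ 2)
        = ∑ k ∈ range 6, f.coeff k * (ω ^ k * Real.exp (-ω ^ 2)) := by
      intro ω
      rw [heval, Finset.sum_mul]
      simp [mul_assoc]
    simp only [h1]
    rw [MeasureTheory.integral_finset_sum _
      (fun k _ => (aux_integrable k).const_mul _)]
    simp [MeasureTheory.integral_const_mul]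
  -- LHS inner sum
  have hB : ∑ i, (f.eval (z i) + f.eval (-z i))
      = ∑ k ∈ range 6, f.coeff k * ∑ i, ((z i)^k + (-z i)^k) := by
    simp only [heval, ← Finset.sum_add_distrib]
    rw [Finset.sum_comm]
    simp only [Finset.mul_sum, mul_add]
  rw [hRHS, hB, heval 0, hMN, ← Finset.sum_add_distrib, Finset.mul_sum, Finset.mul_sum]
  apply Finset.sum_congr rfl
  intro k hk
  have hd := aux_design m z hS hQ k (Finset.mem_range.mp hk)
  calc (1/(2*(m:ℝ)+3)) * (f.coeff k * 0 ^ k + f.coeff k * ∑ i, ((z i)^k + (-z i)^k))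
      = f.coeff k * ((1/(2*(m:ℝ)+3)) * ((0:ℝ)^k + ∑ i, ((z i)^k + (-z i)^k))) := by ring
    _ = f.coeff k * (π ^ (-(1:ℝ)/2) * ∫ x : ℝ, x ^ k * Real.exp (-x ^ 2)) := by rw [hd]
    _ = π ^ (-(1:ℝ)/2) * (f.coeff k * ∫ x : ℝ, x ^ k * Real.exp (-x ^ 2)) := by ring
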